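/- Let s₂,…,sₙ be nonnegative reals, and η₁,…,ηₙ real numbers with ∑ η_i = 0 and ∑ η_i² = 1. Then ∑_{j=2}^n (η₁ − η_j)² s_j ≤ ∑_{j=2}^n s_j + max_{2≤j≤n} s_j. -/
import Mathlib


theorem stmt_4 (n : ℕ) (s : Fin (n + 2) → ℝ)
    (hs : ∀ j : Fin (n + 2), j ≠ 0 → 0 ≤ s j)
    (η : Fin (n + 2) → ℝ) (hsum : ∑ i, η i = 0) (hsq : ∑ i, (η i) ^ 2 = 1) :
    ∑ j ∈ Finset.univ.erase 0, (η 0 - η j) ^ 2 * s j ≤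
      (∑ j ∈ Finset.univ.erase 0, s j) +
        sSup {x : ℝ | ∃ j : Fin (n + 2), j ≠ 0 ∧ x = s j} := by
  classical
  set E := (Finset.univ : Finset (Fin (n+2))).erase 0 with hE
  set A : Set ℝ := {x : ℝ | ∃ j : Fin (n + 2), j ≠ 0 ∧ x = s j} with hA
  set M : ℝ := sSup A with hM
  have hfin : A.Finite := by
    apply Set.Finite.subset (Set.finite_range s)
    rintro x ⟨j, _, rfl⟩; exact ⟨j, rfl⟩
  have hone : (1 : Fin (n+2)) ≠ 0 := by
    intro h
    have := congrArg Fin.val h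
    simp [Fin.val_one, Fin.val_zero] at this
  have hne : A.Nonempty := ⟨s 1, 1, hone, rfl⟩
  have hbdd : BddAbove A := hfin.bddAbove
  have hle : ∀ j : Fin (n+2), j ≠ 0 → s j ≤ M := fun j hj =>
    le_csSup hbdd ⟨j, hj, rfl⟩
  have hMmem : M ∈ A := hne.csSup_mem hfin
  obtain ⟨j₀, hj₀, hMj₀⟩ := hMmem
  have hM0 : 0 ≤ M := hMj₀ ▸ hs j₀ hj₀
  set S : ℝ := ∑ j ∈ E, s j with hS
  set σ : ℝ := ∑ j ∈ E, s j * η j with hσ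
  set Q : ℝ := ∑ j ∈ E, s j * (η j) ^ 2 with hQ
  have hmemE : ∀ j : Fin (n+2), j ∈ E ↔ j ≠ 0 := by
    intro j; simp [hE]
  have hT : ∑ j ∈ E, η j = - η 0 := by
    have := Finset.add_sum_erase Finset.univ η (Finset.mem_univ (0 : Fin (n+2)))
    rw [hsum] at this
    linarith [this]
  have hU : ∑ j ∈ E, (η j) ^ 2 = 1 - (η 0) ^ 2 := by
    have h : (η 0) ^ 2 + ∑ j ∈ E, (η j) ^ 2 = 1 := by
      rw [← hsq]
      exact Finset.add_sum_erase Finset.univ (fun i => (η i) ^ 2) (Finset.mem_univ (0 : Fin (n+2)))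
    linarith
  have expand : ∑ j ∈ E, (η 0 - η j) ^ 2 * s j
      = (η 0) ^ 2 * S - 2 * η 0 * σ + Q := by
    rw [hS, hσ, hQ, Finset.mul_sum, Finset.mul_sum, ← Finset.sum_sub_distrib,
      ← Finset.sum_add_distrib]
    exact Finset.sum_congr rfl fun j _ => by ring
  have h2 : Q ≤ M * (1 - (η 0) ^ 2) := by
    rw [← hU, Finset.mul_sum, hQ]
    apply Finset.sum_le_sum
    intro j hj
    have := hle j ((hmemE j).1 hj)
    nlinarith [sq_nonneg (η j)]
  have hS0 : 0 ≤ S := Finset.sum_nonneg fun j hj => hs j ((hmemE j).1 hj)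
  rcases eq_or_lt_of_le hS0 with hSz | hSpos
  · -- S = 0, so all s j = 0 on E
    have hall : ∀ j ∈ E, s j = 0 := by
      intro j hj
      have := (Finset.sum_eq_zero_iff_of_nonneg
        (fun j hj => hs j ((hmemE j).1 hj))).1 hSz.symm
      exact this j hj
    have hL : ∑ j ∈ E, (η 0 - η j) ^ 2 * s j = 0 :=
      Finset.sum_eq_zero fun j hj => by rw [hall j hj, mul_zero]
    rw [hL]
    linarith
  · have hMpos : 0 < M := by
      rcases hM0.lt_or_eq with h | h
      · exact h
      · exfalso
        have hnp : S ≤ 0 := Finset.sum_nonpos fun j hj =>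
          (hle j ((hmemE j).1 hj)).trans (le_of_eq h.symm)
        linarith
    have h1 : -(2 * M * S * η 0) * σ ≤ M ^ 2 * (η 0) ^ 2 * S + S ^ 2 * Q := by
      have key : ∑ j ∈ E, (-(2 * M * S * η 0) * (s j * η j))
          ≤ ∑ j ∈ E, (M ^ 2 * (η 0) ^ 2 * s j + S ^ 2 * (s j * (η j) ^ 2)) := by
        apply Finset.sum_le_sum
        intro j hj
        have hsj := hs j ((hmemE j).1 hj)
        nlinarith [sq_nonneg (M * η 0 + S * η j), mul_nonneg hsj (sq_nonneg (M * η 0 + S * η j))]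
      rw [← Finset.mul_sum, ← hσ] at key
      rw [Finset.sum_add_distrib, ← Finset.mul_sum, ← Finset.mul_sum, ← hS, ← hQ] at key
      linarith
    rw [expand]
    nlinarith [h1, mul_le_mul_of_nonneg_left h2 (le_of_lt (by positivity : (0:ℝ) < S * (S + M))),
      mul_pos hMpos hSpos, sq_nonneg (η 0), mul_pos hSpos hSpos]
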